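/- For any λ ∈ K^{d+1}, any n ∈ ℕ, and any a, b ∈ ℕ^{d+1}, the n-th iterate of ∂^λ on the basis vector a ⊗ b is given by (∂^λ)^n(a ⊗ b) = n! · Σ λ^l · binom(b,l) · (a − l) ⊗ (b − l), where the sum runs over all l ∈ ℕ^{d+1} with l ≤ min(a,b) and |l| = l_0 + ⋯ + l_d = n. -/

import Mathlib

open TensorProduct

/-- The `n`-th iterate of `∂^λ = Σ_i λ_i ∂^{(i)}` on a basis vector `a ⊗ b` is
`n! · Σ_{l ≤ min(a,b), |l| = n} λ^l · binom(b,l) · (a − l) ⊗ (b − l)`.  Here `D` is the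
free `K`-vector space on `ℕ^{d+1}` (a vector space with a basis `e` indexed by `ℕ^{d+1}`). -/
theorem partial_lambda_pow (K : Type*) [Field K] [CharZero K] (d : ℕ)
    (D : Type*) [AddCommGroup D] [Module K D] (e : Module.Basis (Fin (d + 1) → ℕ) K D)
    (del : Fin (d + 1) → (TensorProduct K D D →ₗ[K] TensorProduct K D D))
    (hdel : ∀ (j : Fin (d + 1)) (a b : Fin (d + 1) → ℕ),
      del j (e a ⊗ₜ e b) =
        if 1 ≤ a j ∧ 1 ≤ b j then
          (b j : K) • (e (a - Pi.single j 1) ⊗ₜ[K] e (b - Pi.single j 1))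
        else 0)
    (lam : Fin (d + 1) → K) (n : ℕ) (a b : Fin (d + 1) → ℕ) :
    ((∑ i, lam i • del i : Module.End K (TensorProduct K D D)) ^ n) (e a ⊗ₜ e b) =
      (n.factorial : K) •
        ∑ l ∈ (Finset.Iic (fun i => min (a i) (b i))).filter (fun l => (∑ i, l i) = n),
          ((∏ i, lam i ^ l i) * ∏ i, ((b i).choose (l i) : K)) •
            (e (a - l) ⊗ₜ[K] e (b - l)) := by
  induction n with
  | zero =>
    have h0 : (Finset.Iic (fun i => min (a i) (b i))).filter
        (fun l : Fin (d+1) → ℕ => (∑ i, l i) = 0) = {(0 : Fin (d+1) → ℕ)} := by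
      ext l
      simp only [Finset.mem_filter, Finset.mem_Iic, Finset.mem_singleton,
        Finset.sum_eq_zero_iff, Finset.mem_univ, forall_true_left]
      constructor
      · rintro ⟨-, h⟩; funext i; exact h i
      · rintro rfl; exact ⟨fun i => Nat.zero_le _, fun i => rfl⟩
    rw [h0]
    simp
  | succ n ih =>
    classical
    set c : (Fin (d+1) → ℕ) → K :=
      fun l => (∏ i, lam i ^ l i) * ∏ i, ((b i).choose (l i) : K) with hc
    set A := (Finset.Iic (fun i => min (a i) (b i))).filter
      (fun l : Fin (d+1) → ℕ => (∑ i, l i) = n) with hA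
    set B := (Finset.Iic (fun i => min (a i) (b i))).filter
      (fun l : Fin (d+1) → ℕ => (∑ i, l i) = n + 1) with hB
    set Del := (∑ i, lam i • del i : Module.End K (TensorProduct K D D)) with hDel
    have key : ∀ l ∈ A,
        Del (c l • (e (a - l) ⊗ₜ[K] e (b - l))) =
        ∑ j, (if l j + 1 ≤ min (a j) (b j) then
            (lam j * (c l * ((b j - l j : ℕ) : K))) •
              (e (a - (l + Pi.single j 1)) ⊗ₜ[K] e (b - (l + Pi.single j 1)))
          else 0) := by
      intro l hl
      rw [map_smul, hDel, LinearMap.sum_apply, Finset.smul_sum]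
      refine Finset.sum_congr rfl fun j _ => ?_
      rw [LinearMap.smul_apply, hdel]
      have hcond : (1 ≤ (a - l) j ∧ 1 ≤ (b - l) j) ↔ l j + 1 ≤ min (a j) (b j) := by
        simp only [Pi.sub_apply]
        omega
      have hsubA : (a - l) - Pi.single j 1 = a - (l + Pi.single j 1) := by
        funext i; simp [Nat.sub_sub]
      have hsubB : (b - l) - Pi.single j 1 = b - (l + Pi.single j 1) := by
        funext i; simp [Nat.sub_sub]
      by_cases h : l j + 1 ≤ min (a j) (b j)
      · rw [if_pos (hcond.mpr h), if_pos h, hsubA, hsubB]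
        simp only [smul_smul, Pi.sub_apply]
        congr 1
        ring
      · rw [if_neg (fun hh => h (hcond.mp hh)), if_neg h, smul_zero, smul_zero]
    rw [pow_succ', Module.End.mul_apply, ih, map_smul, map_sum, Finset.sum_congr rfl key]
    have hscal : ∀ (l : Fin (d+1) → ℕ) (j : Fin (d+1)),
        lam j * (c l * ((b j - l j : ℕ) : K)) =
          ((l j + 1 : ℕ) : K) * c (l + Pi.single j 1) := by
      intro l j
      have h1 : ∀ i, (l + Pi.single j 1 : Fin (d+1) → ℕ) i = if i = j then l i + 1 else l i := by
        intro i
        by_cases h : i = j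
        · subst h; simp
        · simp [Pi.single_apply, h]
      have hch : ((b j).choose (l j + 1) : K) * ((l j : K) + 1) =
          ((b j).choose (l j) : K) * ((b j - l j : ℕ) : K) := by
        have := Nat.choose_succ_right_eq (b j) (l j)
        exact_mod_cast congrArg (Nat.cast : ℕ → K) this
      rw [hc]
      simp only
      have hprod1 : (∏ i, lam i ^ ((l + Pi.single j 1 : Fin (d+1) → ℕ)) i)
          = (∏ i, lam i ^ l i) * lam j := by
        calc (∏ i, lam i ^ ((l + Pi.single j 1 : Fin (d+1) → ℕ)) i)
            = ∏ i, (lam i ^ l i * (if i = j then lam i else 1)) := by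
              refine Finset.prod_congr rfl fun i _ => ?_
              rw [h1 i]
              split
              · rw [pow_succ]
              · rw [mul_one]
          _ = (∏ i, lam i ^ l i) * ∏ i, (if i = j then lam i else 1) :=
              Finset.prod_mul_distrib
          _ = (∏ i, lam i ^ l i) * lam j := by rw [Fintype.prod_ite_eq' j lam]
      have hqn : (∏ i, (b i).choose (l i)) * (b j - l j)
          = (∏ i, (b i).choose (((l + Pi.single j 1 : Fin (d+1) → ℕ)) i)) * (l j + 1) := by
        rw [← Fintype.prod_ite_eq' j (fun i => b i - l i),
          ← Fintype.prod_ite_eq' j (fun i => l i + 1),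
          ← Finset.prod_mul_distrib, ← Finset.prod_mul_distrib]
        refine Finset.prod_congr rfl fun i _ => ?_
        rw [h1 i]
        by_cases h : i = j
        · subst h
          simp only [if_pos rfl]
          exact (Nat.choose_succ_right_eq _ _).symm
        · simp only [if_neg h, mul_one]
      have hqK := congrArg (Nat.cast : ℕ → K) hqn
      push_cast at hqK
      rw [hprod1] at *
      push_cast
      linear_combination (lam j * (∏ i, lam i ^ l i)) * hqK
    have swap : (∑ l ∈ A, ∑ j, (if l j + 1 ≤ min (a j) (b j) then
            (lam j * (c l * ((b j - l j : ℕ) : K))) •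
              (e (a - (l + Pi.single j 1)) ⊗ₜ[K] e (b - (l + Pi.single j 1)))
          else 0)) =
        ∑ m ∈ B, ∑ j, ((m j : K) * c m) • (e (a - m) ⊗ₜ[K] e (b - m)) := by
      have hval : ∀ (p : (Fin (d+1) → ℕ) × Fin (d+1)), p.1 + Pi.single p.2 1 - Pi.single p.2 1 = p.1 := by
        intro p; funext i; simp
      calc (∑ l ∈ A, ∑ j, (if l j + 1 ≤ min (a j) (b j) then
                (lam j * (c l * ((b j - l j : ℕ) : K))) •
                  (e (a - (l + Pi.single j 1)) ⊗ₜ[K] e (b - (l + Pi.single j 1)))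
              else 0))
          = ∑ p ∈ A ×ˢ Finset.univ, (if p.1 p.2 + 1 ≤ min (a p.2) (b p.2) then
                (lam p.2 * (c p.1 * ((b p.2 - p.1 p.2 : ℕ) : K))) •
                  (e (a - (p.1 + Pi.single p.2 1)) ⊗ₜ[K] e (b - (p.1 + Pi.single p.2 1)))
              else 0) := (Finset.sum_product' _ _ _).symm
        _ = ∑ p ∈ (A ×ˢ Finset.univ).filter
              (fun p => p.1 p.2 + 1 ≤ min (a p.2) (b p.2)),
                (lam p.2 * (c p.1 * ((b p.2 - p.1 p.2 : ℕ) : K))) •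
                  (e (a - (p.1 + Pi.single p.2 1)) ⊗ₜ[K] e (b - (p.1 + Pi.single p.2 1))) :=
            (Finset.sum_filter _ _).symm
        _ = ∑ q ∈ (B ×ˢ Finset.univ).filter (fun q => 1 ≤ q.1 q.2),
                ((q.1 q.2 : K) * c q.1) • (e (a - q.1) ⊗ₜ[K] e (b - q.1)) := by
            refine Finset.sum_nbij' (fun p => (p.1 + Pi.single p.2 1, p.2))
              (fun q => (q.1 - Pi.single q.2 1, q.2)) ?_ ?_ ?_ ?_ ?_
            · rintro ⟨l, j⟩ hp
              simp only [hA, hB, Finset.mem_filter, Finset.mem_product, Finset.mem_Iic,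
                Finset.mem_univ, and_true, Pi.le_def] at hp ⊢
              obtain ⟨⟨hle, hsum⟩, hcond⟩ := hp
              have hsingle : ∀ i, (Pi.single j 1 : Fin (d+1) → ℕ) i = if i = j then 1 else 0 := by
                intro i; simp [Pi.single_apply]
              refine ⟨⟨fun i => ?_, ?_⟩, ?_⟩
              · have := hle i
                simp only [Pi.add_apply, hsingle i]
                split
                · next h => subst h; exact hcond
                · omega
              · simp only [Pi.add_apply, Finset.sum_add_distrib, hsum,
                  Fintype.sum_pi_single' j 1]
              · simp [Pi.add_apply]
            · rintro ⟨m, j⟩ hq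
              simp only [hA, hB, Finset.mem_filter, Finset.mem_product, Finset.mem_Iic,
                Finset.mem_univ, and_true, Pi.le_def] at hq ⊢
              obtain ⟨⟨hle, hsum⟩, hone⟩ := hq
              have hsingle : ∀ i, (Pi.single j 1 : Fin (d+1) → ℕ) i = if i = j then 1 else 0 := by
                intro i; simp [Pi.single_apply]
              have hpt : ∀ i, (m - Pi.single j 1 : Fin (d+1) → ℕ) i + (Pi.single j 1 : Fin (d+1) → ℕ) i = m i := by
                intro i
                simp only [Pi.sub_apply, hsingle i]
                split
                · next h => subst h; omega
                · omega
              refine ⟨⟨fun i => ?_, ?_⟩, ?_⟩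
              · exact le_trans (Nat.sub_le _ _) (hle i)
              · have : (∑ i, (m - Pi.single j 1 : Fin (d+1) → ℕ) i) + 1 = n + 1 := by
                  have := Finset.sum_congr rfl (fun i (_ : i ∈ Finset.univ) => hpt i)
                  rw [Finset.sum_add_distrib, Fintype.sum_pi_single' j 1] at this
                  have hsum' : Finset.univ.sum m = n + 1 := hsum
                  omega
                omega
              · simp only [Pi.sub_apply]
                rw [hsingle j, if_pos rfl]
                have := hle j
                omega
            · rintro ⟨l, j⟩ hp
              simp only [Prod.mk.injEq]
              exact ⟨hval (l, j), trivial⟩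
            · rintro ⟨m, j⟩ hq
              simp only [Finset.mem_filter, Finset.mem_product] at hq
              have hone : 1 ≤ m j := hq.2
              simp only [Prod.mk.injEq]
              refine ⟨?_, trivial⟩
              funext i
              have hsingle : (Pi.single j 1 : Fin (d+1) → ℕ) i = if i = j then 1 else 0 := by
                simp [Pi.single_apply]
              simp only [Pi.add_apply, Pi.sub_apply, hsingle]
              split
              · next h => subst h; omega
              · omega
            · rintro ⟨l, j⟩ hp
              simp only
              rw [hscal l j]
              congr 2
              simp
        _ = ∑ q ∈ B ×ˢ Finset.univ,
                ((q.1 q.2 : K) * c q.1) • (e (a - q.1) ⊗ₜ[K] e (b - q.1)) := by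
            refine Finset.sum_filter_of_ne fun q hq hne => ?_
            by_contra h
            push_neg at h
            apply hne
            have h0 : q.1 q.2 = 0 := by omega
            rw [h0]
            simp
        _ = ∑ m ∈ B, ∑ j, ((m j : K) * c m) • (e (a - m) ⊗ₜ[K] e (b - m)) :=
            Finset.sum_product' (s := B) (t := Finset.univ) (f := fun m j => ((m j : K) * c m) • (e (a - m) ⊗ₜ[K] e (b - m)))
    rw [swap]
    have hfin : ∀ m ∈ B, (∑ j, ((m j : K) * c m) • (e (a - m) ⊗ₜ[K] e (b - m)))
        = ((n + 1 : ℕ) : K) • (c m • (e (a - m) ⊗ₜ[K] e (b - m))) := by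
      intro m hm
      rw [← Finset.sum_smul, ← Finset.sum_mul, ← Nat.cast_sum,
        (Finset.mem_filter.mp hm).2, smul_smul]
    rw [Finset.sum_congr rfl hfin, ← Finset.smul_sum, smul_smul, Nat.factorial_succ]
    congr 1
    push_cast
    ring
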